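/- Consider the product probability measure on Boolean matrices W : Fin B → Fin S → Bool whose B·S entries are independent Bernoulli(q) random variables, with 0 < q < 1, and let K ≥ 1 with K ≤ S. Set μ₂ = B·q·(1−q)^{K−1} and let ε be a real with 0 ≤ ε < μ₂. Then the probability that W fails the (K,ε)-disjunctness condition for some column and some set of K−1 other columns is at most the union bound: P( ∃ i, ∃ T ⊆ columns \ {i} with |T| = K−1 such that |{r : W r i = true and W r j = false ∀ j ∈ T}| < ε ) ≤ S · C(S−1, K−1) · exp(−(μ₂ − ε)² / (2 μ₂)). -/

import Mathlib

open MeasureTheory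

lemma exp_neg_le_quad {t : ℝ} (ht : 0 ≤ t) : Real.exp (-t) ≤ 1 - t + t^2/2 := by
  have h1 : 1 + t + t^2/2 ≤ Real.exp t := by
    have h := Real.sum_le_exp_of_nonneg ht 3
    simp [Finset.sum_range_succ, Nat.factorial] at h
    nlinarith [h]
  have hpos : (0:ℝ) < 1 + t + t^2/2 := by nlinarith
  have h2 : Real.exp (-t) ≤ (1 + t + t^2/2)⁻¹ := by
    rw [Real.exp_neg]
    exact inv_anti₀ hpos h1
  refine h2.trans ?_
  rw [inv_le_iff_one_le_mul₀ hpos]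
  nlinarith [sq_nonneg t, sq_nonneg (t^2)]

lemma chernoff_bool (B : ℕ) {α : Type*} [Fintype α] [DecidableEq α] (w : α → ℝ)
    (hw : ∀ a, 0 ≤ w a) (hsum : ∑ a, w a = 1)
    (C : α → Prop) [DecidablePred C] (p : ℝ)
    (hp : ∑ a ∈ Finset.univ.filter C, w a = p)
    (μ ε : ℝ) (hμ : μ = B * p) (hε0 : 0 ≤ ε) (hεμ : ε < μ) :
    ∑ W ∈ Finset.univ.filter (fun W : Fin B → α =>
        ((Finset.univ.filter fun r => C (W r)).card : ℝ) < ε), ∏ r, w (W r)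
      ≤ Real.exp (-(μ - ε)^2 / (2*μ)) := by
  have hμ0 : 0 < μ := lt_of_le_of_lt hε0 hεμ
  set t : ℝ := (μ - ε)/μ with htdef
  have ht0 : 0 < t := div_pos (by linarith) hμ0
  have ht1 : t ≤ 1 := by rw [div_le_one hμ0]; linarith
  have hp0 : 0 ≤ p := by
    rw [← hp]; exact Finset.sum_nonneg fun a _ => hw a
  have hp1 : p ≤ 1 := by
    rw [← hsum, ← hp]
    exact Finset.sum_le_sum_of_subset_of_nonneg (Finset.filter_subset _ _) fun a _ _ => hw a
  set g : α → ℝ := fun a => w a * (if C a then Real.exp (-t) else 1) with hg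
  have hgnn : ∀ a, 0 ≤ g a := by
    intro a
    refine mul_nonneg (hw a) ?_
    split <;> [exact (Real.exp_pos _).le; exact zero_le_one]
  have hgsum : ∑ a, g a = 1 - p + p * Real.exp (-t) := by
    rw [← Finset.sum_filter_add_sum_filter_not Finset.univ C g]
    have h1 : ∑ a ∈ Finset.univ.filter C, g a = p * Real.exp (-t) := by
      rw [← hp, Finset.sum_mul]
      refine Finset.sum_congr rfl fun a ha => ?_
      simp [hg, (Finset.mem_filter.mp ha).2]
    have h2 : ∑ a ∈ Finset.univ.filter (fun a => ¬ C a), g a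
        = ∑ a ∈ Finset.univ.filter (fun a => ¬ C a), w a := by
      refine Finset.sum_congr rfl fun a ha => ?_
      simp [hg, (Finset.mem_filter.mp ha).2]
    have h3 := Finset.sum_filter_add_sum_filter_not Finset.univ C w
    rw [hsum] at h3
    rw [h1, h2]
    linarith [hp ▸ h3]
  have key : ∀ W : Fin B → α,
      ((Finset.univ.filter fun r => C (W r)).card : ℝ) < ε →
      ∏ r, w (W r) ≤ Real.exp (t*ε) * ∏ r, g (W r) := by
    intro W hW
    have hsplit : ∏ r, g (W r)
        = (∏ r, w (W r)) * Real.exp (-t) ^ (Finset.univ.filter fun r => C (W r)).card := by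
      rw [hg]
      simp only [Finset.prod_mul_distrib]
      congr 1
      rw [Finset.prod_ite, Finset.prod_const, Finset.prod_const, one_pow, mul_one]
    rw [hsplit, ← mul_assoc, mul_comm (Real.exp (t*ε)), mul_assoc]
    set n := (Finset.univ.filter fun r => C (W r)).card
    have h1 : (1:ℝ) ≤ Real.exp (-t) ^ n * Real.exp (t*ε) := by
      rw [← Real.exp_nat_mul, ← Real.exp_add, ← Real.exp_zero]
      apply Real.exp_le_exp.mpr
      have : (n:ℝ) < ε := hW
      nlinarith
    nlinarith [Finset.prod_nonneg (fun r (_ : r ∈ Finset.univ) => hw (W r)), h1]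
  calc ∑ W ∈ Finset.univ.filter (fun W : Fin B → α =>
        ((Finset.univ.filter fun r => C (W r)).card : ℝ) < ε), ∏ r, w (W r)
      ≤ ∑ W ∈ Finset.univ.filter (fun W : Fin B → α =>
        ((Finset.univ.filter fun r => C (W r)).card : ℝ) < ε),
          Real.exp (t*ε) * ∏ r, g (W r) := by
        exact Finset.sum_le_sum fun W hW => key W (Finset.mem_filter.mp hW).2
    _ ≤ ∑ W : Fin B → α, Real.exp (t*ε) * ∏ r, g (W r) := by
        refine Finset.sum_le_sum_of_subset_of_nonneg (Finset.filter_subset _ _) fun W _ _ => ?_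
        exact mul_nonneg (Real.exp_pos _).le (Finset.prod_nonneg fun r _ => hgnn (W r))
    _ = Real.exp (t*ε) * ∑ W : Fin B → α, ∏ r, g (W r) := by rw [← Finset.mul_sum]
    _ = Real.exp (t*ε) * (1 - p + p * Real.exp (-t))^B := by
        rw [← hgsum]
        congr 1
        rw [← Fintype.piFinset_univ,
          ← Finset.prod_univ_sum (fun _ : Fin B => Finset.univ) (fun _ a => g a)]
        rw [Finset.prod_const, Finset.card_univ, Fintype.card_fin]
    _ ≤ Real.exp (t*ε) * (Real.exp (-(p * (1 - Real.exp (-t)))))^B := by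
        have hbase0 : (0:ℝ) ≤ 1 - p + p * Real.exp (-t) := by
          nlinarith [(Real.exp_pos (-t)).le]
        have hbase : 1 - p + p * Real.exp (-t) ≤ Real.exp (-(p * (1 - Real.exp (-t)))) := by
          have := Real.add_one_le_exp (-(p * (1 - Real.exp (-t))))
          linarith
        exact mul_le_mul_of_nonneg_left (pow_le_pow_left₀ hbase0 hbase B) (Real.exp_pos _).le
    _ = Real.exp (t*ε - B * (p * (1 - Real.exp (-t)))) := by
        rw [← Real.exp_nat_mul, ← Real.exp_add]
        ring_nf
    _ ≤ Real.exp (-(μ - ε)^2 / (2*μ)) := by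
        apply Real.exp_le_exp.mpr
        have hexp := exp_neg_le_quad ht0.le
        have h1 : μ * (t - t^2/2) ≤ μ * (1 - Real.exp (-t)) := by
          apply mul_le_mul_of_nonneg_left (by linarith) hμ0.le
        have h2 : t*ε - μ*(t - t^2/2) = -(μ - ε)^2 / (2*μ) := by
          rw [htdef]; field_simp; ring
        have h3 : (B:ℝ) * (p * (1 - Real.exp (-t))) = μ * (1 - Real.exp (-t)) := by
          rw [hμ]; ring
        linarith


/-- The product probability measure on Boolean matrices `W : Fin B → Fin S → Bool` whose
`B·S` entries are independent Bernoulli(`q`) random variables. -/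
noncomputable def matrixBernoulliMeasure (B S : ℕ) (q : ENNReal) (h : q ≤ 1) :
    Measure (Fin B → Fin S → Bool) :=
  Measure.pi fun _ : Fin B => Measure.pi fun _ : Fin S => (PMF.bernoulli q.toNNReal (by simpa using ENNReal.toNNReal_mono ENNReal.one_ne_top h)).toMeasure

lemma matrix_singleton (B S : ℕ) (q : ℝ) (h0 : 0 ≤ q) (h1 : q ≤ 1)
    (W : Fin B → Fin S → Bool) :
    matrixBernoulliMeasure B S (ENNReal.ofReal q) (ENNReal.ofReal_le_one.mpr h1) {W}
      = ENNReal.ofReal (∏ r : Fin B, ∏ j : Fin S, (if W r j then q else 1 - q)) := by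
  have hnn : ∀ b : Bool, (0:ℝ) ≤ (if b then q else 1 - q) := by
    intro b; split <;> linarith
  have hbool : ∀ b : Bool,
      (PMF.bernoulli (ENNReal.ofReal q).toNNReal (le_of_le_of_eq (ENNReal.toNNReal_mono ENNReal.one_ne_top (ENNReal.ofReal_le_one.mpr h1)) ENNReal.toNNReal_one)).toMeasure {b}
        = ENNReal.ofReal (if b then q else 1 - q) := by
    intro b
    rw [PMF.toMeasure_apply_singleton _ b (measurableSet_singleton b), PMF.bernoulli_apply]
    cases b
    · simp [ENNReal.ofReal_sub 1 h0, ENNReal.coe_toNNReal, ENNReal.ofReal_ne_top]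
    · simp [ENNReal.coe_toNNReal, ENNReal.ofReal_ne_top]
  have hrow : ∀ v : Fin S → Bool,
      (Measure.pi fun _ : Fin S =>
        (PMF.bernoulli (ENNReal.ofReal q).toNNReal (le_of_le_of_eq (ENNReal.toNNReal_mono ENNReal.one_ne_top (ENNReal.ofReal_le_one.mpr h1)) ENNReal.toNNReal_one)).toMeasure) {v}
        = ENNReal.ofReal (∏ j, if v j then q else 1 - q) := by
    intro v
    rw [← Set.univ_pi_singleton v, Measure.pi_pi,
      ENNReal.ofReal_prod_of_nonneg (fun j _ => hnn (v j))]
    exact Finset.prod_congr rfl fun j _ => hbool (v j)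
  rw [matrixBernoulliMeasure, ← Set.univ_pi_singleton W, Measure.pi_pi,
    ENNReal.ofReal_prod_of_nonneg
      (fun r _ => Finset.prod_nonneg fun j _ => hnn (W r j))]
  exact Finset.prod_congr rfl fun r _ => hrow (W r)


/-- Union bound for the failure of `(K, ε)`-disjunctness under the i.i.d. Bernoulli(`q`)
measure on Boolean matrices `W : Fin B → Fin S → Bool` (`0 < q < 1`, `1 ≤ K ≤ S`). With
`μ₂ = B·q·(1−q)^{K−1}` and `0 ≤ ε < μ₂`, the probability that there exist a column `i` and
a set `T` of `K − 1` other columns such that fewer than `ε` rows `r` satisfy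
`W r i = true` and `W r j = false` for all `j ∈ T` is at most
`S · C(S−1, K−1) · exp(−(μ₂ − ε)² / (2 μ₂))`. -/
theorem disjunctness_failure_union_bound (B S K : ℕ) (hK : 1 ≤ K) (hKS : K ≤ S)
    (q : ℝ) (hq0 : 0 < q) (hq1 : q < 1)
    (μ₂ : ℝ) (hμ₂ : μ₂ = B * q * (1 - q) ^ (K - 1))
    (ε : ℝ) (hε0 : 0 ≤ ε) (hεμ : ε < μ₂) :
    matrixBernoulliMeasure B S (ENNReal.ofReal q) (ENNReal.ofReal_le_one.mpr hq1.le)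
        {W | ∃ i : Fin S, ∃ T : Finset (Fin S), i ∉ T ∧ T.card = K - 1 ∧
            ((Finset.univ.filter fun r : Fin B =>
              W r i = true ∧ ∀ j ∈ T, W r j = false).card : ℝ) < ε}
      ≤ (S : ENNReal) * ((S - 1).choose (K - 1) : ENNReal) *
          ENNReal.ofReal (Real.exp (-(μ₂ - ε) ^ 2 / (2 * μ₂))) := by
  set p : ℝ := q * (1 - q)^(K-1) with hpdef
  set w : (Fin S → Bool) → ℝ := fun v => ∏ j, (if v j then q else 1 - q) with hwdef
  have hwnn : ∀ v, 0 ≤ w v := by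
    intro v
    exact Finset.prod_nonneg fun j _ => by split <;> linarith
  have hwsum : ∑ v, w v = 1 := by
    have h := Finset.prod_univ_sum (fun _ : Fin S => (Finset.univ : Finset Bool))
      (fun _ b => if b then q else (1:ℝ) - q)
    rw [Fintype.piFinset_univ] at h
    rw [hwdef, ← h]
    have h1 : ∀ j : Fin S, (∑ b : Bool, if b then q else (1:ℝ) - q) = 1 := by
      intro j; simp
    simp [h1]
  have hpval : ∀ (i : Fin S) (T : Finset (Fin S)), i ∉ T → T.card = K - 1 →
      ∑ v ∈ Finset.univ.filter
        (fun v : Fin S → Bool => v i = true ∧ ∀ j ∈ T, v j = false), w v = p := by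
    intro i T hiT hcard
    classical
    set s : Fin S → Finset Bool :=
      fun j => if j = i then {true} else if j ∈ T then {false} else Finset.univ with hsdef
    have hfilter : Finset.univ.filter
        (fun v : Fin S → Bool => v i = true ∧ ∀ j ∈ T, v j = false)
        = Fintype.piFinset s := by
      ext v
      simp only [Finset.mem_filter, Finset.mem_univ, true_and, Fintype.mem_piFinset]
      constructor
      · rintro ⟨h1, h2⟩ j
        by_cases hj : j = i
        · subst hj; simp [hsdef, h1]
        · by_cases hjT : j ∈ T
          · simp [hsdef, hj, hjT, h2 j hjT]
          · simp [hsdef, hj, hjT]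
      · intro h
        constructor
        · have := h i; simpa [hsdef] using this
        · intro j hj
          have hji : j ≠ i := fun e => hiT (e ▸ hj)
          have := h j; simpa [hsdef, hji, hj] using this
    rw [hfilter]
    have h := Finset.prod_univ_sum s (fun _ b => if b then q else (1:ℝ) - q)
    rw [hwdef, ← h]
    have hterm : ∀ j : Fin S, (∑ b ∈ s j, if b then q else (1:ℝ) - q)
        = if j = i then q else if j ∈ T then 1 - q else 1 := by
      intro j
      by_cases hj : j = i
      · simp [hsdef, hj]
      · by_cases hjT : j ∈ T
        · simp [hsdef, hj, hjT]
        · simp [hsdef, hj, hjT]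
    rw [Finset.prod_congr rfl (fun j _ => hterm j)]
    rw [← Finset.prod_subset (Finset.subset_univ (insert i T)) (fun j _ hj => by
        have h1 : j ≠ i := fun e => hj (by simp [e])
        have h2 : j ∉ T := fun e => hj (Finset.mem_insert_of_mem e)
        simp [h1, h2])]
    rw [Finset.prod_insert hiT]
    have h2 : ∀ j ∈ T, (if j = i then q else if j ∈ T then 1 - q else 1) = 1 - q := by
      intro j hj
      have hji : j ≠ i := fun e => hiT (e ▸ hj)
      simp [hji, hj]
    rw [Finset.prod_congr rfl h2, Finset.prod_const, hcard]
    simp [hpdef]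
  have hμB : μ₂ = B * p := by rw [hμ₂, hpdef]; ring
  have hevent : ∀ (i : Fin S) (T : Finset (Fin S)), i ∉ T → T.card = K - 1 →
      matrixBernoulliMeasure B S (ENNReal.ofReal q) (ENNReal.ofReal_le_one.mpr hq1.le)
        {W : Fin B → Fin S → Bool | ((Finset.univ.filter fun r : Fin B =>
          W r i = true ∧ ∀ j ∈ T, W r j = false).card : ℝ) < ε}
        ≤ ENNReal.ofReal (Real.exp (-(μ₂ - ε)^2 / (2*μ₂))) := by
    intro i T hiT hcard
    set F : Finset (Fin B → Fin S → Bool) := Finset.univ.filter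
        (fun W : Fin B → Fin S → Bool => ((Finset.univ.filter fun r : Fin B =>
          W r i = true ∧ ∀ j ∈ T, W r j = false).card : ℝ) < ε) with hFdef
    have hsub : {W : Fin B → Fin S → Bool | ((Finset.univ.filter fun r : Fin B =>
          W r i = true ∧ ∀ j ∈ T, W r j = false).card : ℝ) < ε} ⊆ ⋃ W ∈ F, {W} := by
      intro W hW
      exact Set.mem_iUnion₂.mpr ⟨W, Finset.mem_filter.mpr ⟨Finset.mem_univ W, hW⟩, rfl⟩
    calc matrixBernoulliMeasure B S (ENNReal.ofReal q) (ENNReal.ofReal_le_one.mpr hq1.le)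
          {W : Fin B → Fin S → Bool | ((Finset.univ.filter fun r : Fin B =>
            W r i = true ∧ ∀ j ∈ T, W r j = false).card : ℝ) < ε}
        ≤ matrixBernoulliMeasure B S (ENNReal.ofReal q) (ENNReal.ofReal_le_one.mpr hq1.le)
            (⋃ W ∈ F, {W}) := measure_mono hsub
      _ ≤ ∑ W ∈ F, matrixBernoulliMeasure B S (ENNReal.ofReal q)
            (ENNReal.ofReal_le_one.mpr hq1.le) {W} := measure_biUnion_finset_le F _
      _ = ∑ W ∈ F, ENNReal.ofReal (∏ r, w (W r)) := by
          refine Finset.sum_congr rfl fun W _ => ?_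
          rw [matrix_singleton B S q hq0.le hq1.le W]
      _ = ENNReal.ofReal (∑ W ∈ F, ∏ r, w (W r)) := by
          rw [ENNReal.ofReal_sum_of_nonneg
            (fun W _ => Finset.prod_nonneg fun r _ => hwnn (W r))]
      _ ≤ ENNReal.ofReal (Real.exp (-(μ₂ - ε)^2 / (2*μ₂))) := by
          apply ENNReal.ofReal_le_ofReal
          exact chernoff_bool B w hwnn hwsum
            (fun v => v i = true ∧ ∀ j ∈ T, v j = false) p (hpval i T hiT hcard)
            μ₂ ε hμB hε0 hεμ
  -- union bound
  have hsubU : {W : Fin B → Fin S → Bool | ∃ i : Fin S, ∃ T : Finset (Fin S),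
        i ∉ T ∧ T.card = K - 1 ∧ ((Finset.univ.filter fun r : Fin B =>
          W r i = true ∧ ∀ j ∈ T, W r j = false).card : ℝ) < ε}
      ⊆ ⋃ i : Fin S, ⋃ T ∈ (Finset.univ.erase i).powersetCard (K-1),
          {W : Fin B → Fin S → Bool | ((Finset.univ.filter fun r : Fin B =>
            W r i = true ∧ ∀ j ∈ T, W r j = false).card : ℝ) < ε} := by
    rintro W ⟨i, T, hiT, hcard, hlt⟩
    refine Set.mem_iUnion.mpr ⟨i, Set.mem_iUnion₂.mpr ⟨T, Finset.mem_powersetCard.mpr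
      ⟨Finset.subset_erase.mpr ⟨Finset.subset_univ T, hiT⟩, hcard⟩, hlt⟩⟩
  calc matrixBernoulliMeasure B S (ENNReal.ofReal q) (ENNReal.ofReal_le_one.mpr hq1.le)
        {W | ∃ i : Fin S, ∃ T : Finset (Fin S), i ∉ T ∧ T.card = K - 1 ∧
            ((Finset.univ.filter fun r : Fin B =>
              W r i = true ∧ ∀ j ∈ T, W r j = false).card : ℝ) < ε}
      ≤ ∑' i : Fin S, matrixBernoulliMeasure B S (ENNReal.ofReal q)
          (ENNReal.ofReal_le_one.mpr hq1.le)
          (⋃ T ∈ (Finset.univ.erase i).powersetCard (K-1),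
            {W : Fin B → Fin S → Bool | ((Finset.univ.filter fun r : Fin B =>
              W r i = true ∧ ∀ j ∈ T, W r j = false).card : ℝ) < ε}) :=
        (measure_mono hsubU).trans (measure_iUnion_le _)
    _ = ∑ i : Fin S, matrixBernoulliMeasure B S (ENNReal.ofReal q)
          (ENNReal.ofReal_le_one.mpr hq1.le)
          (⋃ T ∈ (Finset.univ.erase i).powersetCard (K-1),
            {W : Fin B → Fin S → Bool | ((Finset.univ.filter fun r : Fin B =>
              W r i = true ∧ ∀ j ∈ T, W r j = false).card : ℝ) < ε}) := tsum_fintype _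
    _ ≤ ∑ i : Fin S, ∑ T ∈ (Finset.univ.erase i).powersetCard (K-1),
          matrixBernoulliMeasure B S (ENNReal.ofReal q)
          (ENNReal.ofReal_le_one.mpr hq1.le)
            {W : Fin B → Fin S → Bool | ((Finset.univ.filter fun r : Fin B =>
              W r i = true ∧ ∀ j ∈ T, W r j = false).card : ℝ) < ε} :=
        Finset.sum_le_sum fun i _ => measure_biUnion_finset_le _ _
    _ ≤ ∑ i : Fin S, ∑ _T ∈ (Finset.univ.erase i).powersetCard (K-1),
          ENNReal.ofReal (Real.exp (-(μ₂ - ε)^2 / (2*μ₂))) := by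
        refine Finset.sum_le_sum fun i _ => Finset.sum_le_sum fun T hT => ?_
        rw [Finset.mem_powersetCard] at hT
        have hiT : i ∉ T := fun h => (Finset.mem_erase.mp (hT.1 h)).1 rfl
        exact hevent i T hiT hT.2
    _ = (S : ENNReal) * (((S - 1).choose (K - 1) : ℕ) : ENNReal) *
          ENNReal.ofReal (Real.exp (-(μ₂ - ε) ^ 2 / (2 * μ₂))) := by
        have hcardpc : ∀ i : Fin S,
            ((Finset.univ.erase i).powersetCard (K-1)).card = (S-1).choose (K-1) := by
          intro i
          rw [Finset.card_powersetCard, Finset.card_erase_of_mem (Finset.mem_univ i),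
            Finset.card_univ, Fintype.card_fin]
        simp only [Finset.sum_const, hcardpc, Finset.card_univ, Fintype.card_fin,
          nsmul_eq_mul]
        rw [← mul_assoc]
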